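/- Let K be a field and F ∈ K[x] monic and separable. Let O ⊆ K be a subring such that F = g_1 ⋯ g_s = h_1 ⋯ h_s, where all g_j, h_j ∈ O[x] are monic (not necessarily irreducible). Let P ⊆ O be a maximal ideal such that the image of F in (O/P)[x] is separable. If g_j ≡ h_j mod P for every 1 ≤ j ≤ s (coefficientwise congruence), then g_j = h_j for every 1 ≤ j ≤ s. -/
import Mathlib


open Polynomial

/-- Over a local ring, if a pair of polynomials with the second monic has coprime
images over the residue field, then the pair is coprime. -/
lemma coprime_of_coprime_residue {R : Type*} [CommRing R] [IsLocalRing R] {a b : R[X]}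
    (hb : b.Monic)
    (hcop : IsCoprime (a.map (IsLocalRing.residue R)) (b.map (IsLocalRing.residue R))) :
    IsCoprime a b := by
  haveI hfin : Module.Finite R (AdjoinRoot b) := (AdjoinRoot.powerBasis' hb).finite
  haveI hint : Algebra.IsIntegral R (AdjoinRoot b) := Algebra.IsIntegral.of_finite R _
  obtain ⟨u, v, huv⟩ := hcop
  have hressurj : Function.Surjective (IsLocalRing.residue R) := Ideal.Quotient.mk_surjective
  obtain ⟨U, hU⟩ := Polynomial.map_surjective _ hressurj u
  obtain ⟨V, hV⟩ := Polynomial.map_surjective _ hressurj v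
  have key : IsUnit (AdjoinRoot.mk b a) := by
    by_contra hna
    obtain ⟨M, hM, haM⟩ := exists_max_ideal_of_mem_nonunits hna
    haveI := hM
    haveI : Nontrivial ((AdjoinRoot b) ⧸ M) := Ideal.Quotient.nontrivial_iff.mpr hM.ne_top
    have hcomap : Ideal.comap (algebraMap R (AdjoinRoot b)) M = IsLocalRing.maximalIdeal R :=
      IsLocalRing.eq_maximalIdeal (Ideal.isMaximal_comap_of_isIntegral_of_isMaximal M)
    set φ : R[X] →+* (AdjoinRoot b) ⧸ M := (Ideal.Quotient.mk M).comp (AdjoinRoot.mk b) with hφ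
    have hφC : ∀ r ∈ IsLocalRing.maximalIdeal R, φ (C r) = 0 := by
      intro r hr
      rw [← hcomap] at hr
      have : AdjoinRoot.mk b (C r) ∈ M := by
        simpa [AdjoinRoot.algebraMap_eq] using hr
      simpa [hφ] using (Ideal.Quotient.eq_zero_iff_mem).2 this
    have hw : ∀ p : R[X], p.map (IsLocalRing.residue R) = 0 → φ p = 0 := by
      intro p hp
      have hcoeff : ∀ i, p.coeff i ∈ IsLocalRing.maximalIdeal R := by
        intro i
        have h0 : (p.map (IsLocalRing.residue R)).coeff i = 0 := by rw [hp]; simp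
        rw [Polynomial.coeff_map] at h0
        exact (Ideal.Quotient.eq_zero_iff_mem).1 h0
      conv_lhs => rw [← Polynomial.sum_C_mul_X_pow_eq p]
      rw [Polynomial.sum]
      simp only [map_sum, map_mul, map_pow]
      exact Finset.sum_eq_zero fun i _ => by rw [hφC _ (hcoeff i), zero_mul]
    have hφa : φ a = 0 := by
      simp only [hφ, RingHom.comp_apply]
      exact (Ideal.Quotient.eq_zero_iff_mem).2 haM
    have hφb : φ b = 0 := by
      simp [hφ, AdjoinRoot.mk_self]
    have h1 : φ (U * a + V * b - 1) = 0 := by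
      apply hw
      rw [Polynomial.map_sub, Polynomial.map_add, Polynomial.map_mul, Polynomial.map_mul,
        hU, hV, Polynomial.map_one, huv, sub_self]
    rw [map_sub, map_add, map_mul, map_mul, hφa, hφb, map_one, mul_zero, mul_zero,
      add_zero, zero_sub, neg_eq_zero] at h1
    exact one_ne_zero h1
  obtain ⟨c, hc⟩ := isUnit_iff_exists_inv.mp key
  obtain ⟨W, rfl⟩ := AdjoinRoot.mk_surjective c
  have : AdjoinRoot.mk b (a * W - 1) = 0 := by
    rw [map_sub, map_mul, hc, map_one, sub_self]
  obtain ⟨V', hV'⟩ := (AdjoinRoot.mk_eq_zero).1 this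
  exact ⟨W, -V', by linear_combination hV'⟩

/-- Let `K` be a field, `F ∈ K[x]` monic and separable, and `O ⊆ K` a subring with
`F = g_1 ⋯ g_s = h_1 ⋯ h_s`, all `g_j, h_j ∈ O[x]` monic.  Let `P ⊆ O` be a maximal
ideal such that the image of `F` in `(O/P)[x]` is separable.  If `g_j ≡ h_j mod P`
for every `j`, then `g_j = h_j` for every `j`. -/
theorem stmt_13 {K : Type*} [Field K] (O : Subring K) (P : Ideal O) (hP : P.IsMaximal)
    (s : ℕ) (g h : Fin s → Polynomial O)
    (hg : ∀ j, (g j).Monic) (hh : ∀ j, (h j).Monic)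
    (F : Polynomial K) (hFm : F.Monic) (hFsep : F.Separable)
    (hgF : (∏ j, g j).map O.subtype = F)
    (hhF : (∏ j, h j).map O.subtype = F)
    (hFsepP : ((∏ j, g j).map (Ideal.Quotient.mk P)).Separable)
    (hcong : ∀ j, (g j).map (Ideal.Quotient.mk P) = (h j).map (Ideal.Quotient.mk P)) :
    ∀ j, g j = h j := by
  classical
  haveI := hP
  haveI : Nontrivial (O ⧸ P) := Ideal.Quotient.nontrivial_iff.mpr hP.ne_top
  have hsubinj : Function.Injective (O.subtype) := Subtype.val_injective
  have hinj : Function.Injective (Polynomial.map O.subtype) :=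
    Polynomial.map_injective _ hsubinj
  have hprod : (∏ i, g i) = ∏ i, h i := hinj (hgF.trans hhF.symm)
  intro j
  set R := Localization.AtPrime P with hR
  -- the lift of `O.subtype` to the localization
  have hunit : ∀ y : P.primeCompl, IsUnit (O.subtype y) := by
    intro y
    have hy0 : (y : O) ≠ 0 := fun h0 => y.2 (h0 ▸ P.zero_mem)
    exact isUnit_iff_ne_zero.2 fun h0 => hy0 (hsubinj h0)
  set ψ : R →+* K := IsLocalization.lift (S := R) hunit with hψ
  have hψcomp : ψ.comp (algebraMap O R) = O.subtype := IsLocalization.lift_comp hunit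
  -- the map from O/P to the residue field of R
  have hker : ∀ p ∈ P, (IsLocalRing.residue R).comp (algebraMap O R) p = 0 := by
    intro p hp
    apply (Ideal.Quotient.eq_zero_iff_mem).2
    exact (IsLocalization.AtPrime.to_map_mem_maximal_iff R P p).2 hp
  set ρ : (O ⧸ P) →+* IsLocalRing.ResidueField R := Ideal.Quotient.lift P _ hker with hρ
  have hρcomp : ρ.comp (Ideal.Quotient.mk P) = (IsLocalRing.residue R).comp (algebraMap O R) :=
    RingHom.ext fun x => Ideal.Quotient.lift_mk P _ hker
  -- decompose the product
  set Hr : Polynomial O := ∏ i ∈ Finset.univ.erase j, h i with hHr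
  have hsplit : (∏ i, h i) = h j * Hr :=
    (Finset.mul_prod_erase _ _ (Finset.mem_univ j)).symm
  have hHrm : Hr.Monic := Polynomial.monic_prod_of_monic _ _ fun i _ => hh i
  -- coprimality mod P
  have hmapprod : (∏ i, g i).map (Ideal.Quotient.mk P)
      = (g j).map (Ideal.Quotient.mk P) * Hr.map (Ideal.Quotient.mk P) := by
    rw [hprod, hsplit, Polynomial.map_mul, hcong j]
  have hcopP : IsCoprime ((g j).map (Ideal.Quotient.mk P)) (Hr.map (Ideal.Quotient.mk P)) := by
    rw [hmapprod] at hFsepP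
    exact hFsepP.isCoprime
  -- transfer to the residue field of R and lift coprimality to R[X]
  have hmm : ∀ p : Polynomial O,
      (p.map (Ideal.Quotient.mk P)).map ρ = (p.map (algebraMap O R)).map (IsLocalRing.residue R) := by
    intro p
    rw [Polynomial.map_map, Polynomial.map_map, hρcomp]
  have hcopRes : IsCoprime
      (((g j).map (algebraMap O R)).map (IsLocalRing.residue R))
      ((Hr.map (algebraMap O R)).map (IsLocalRing.residue R)) := by
    rw [← hmm, ← hmm]
    have := hcopP.map (Polynomial.mapRingHom ρ)
    simpa using this
  have hcopR : IsCoprime ((g j).map (algebraMap O R)) (Hr.map (algebraMap O R)) :=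
    coprime_of_coprime_residue (hHrm.map _) hcopRes
  -- push coprimality to K[X]
  have hmmK : ∀ p : Polynomial O, (p.map (algebraMap O R)).map ψ = p.map O.subtype := by
    intro p
    rw [Polynomial.map_map, hψcomp]
  have hcopK : IsCoprime ((g j).map O.subtype) (Hr.map O.subtype) := by
    rw [← hmmK, ← hmmK]
    have := hcopR.map (Polynomial.mapRingHom ψ)
    simpa using this
  -- divisibility over K
  have hdvd : (g j).map O.subtype ∣ (h j).map O.subtype * Hr.map O.subtype := by
    rw [← Polynomial.map_mul, ← hsplit, ← hprod]
    exact Polynomial.map_dvd _ (Finset.dvd_prod_of_mem g (Finset.mem_univ j))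
  have hdvd2 : (g j).map O.subtype ∣ (h j).map O.subtype :=
    hcopK.dvd_of_dvd_mul_right hdvd
  -- equal degrees
  have hdeg : ((h j).map O.subtype).natDegree ≤ ((g j).map O.subtype).natDegree := by
    rw [(hh j).natDegree_map, (hg j).natDegree_map, ← (hg j).natDegree_map (Ideal.Quotient.mk P),
      ← (hh j).natDegree_map (Ideal.Quotient.mk P), hcong j]
  have := eq_of_monic_of_dvd_of_natDegree_le ((hg j).map _) ((hh j).map _) hdvd2 hdeg
  exact (hinj this).symm
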